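/- Let U ∈ U(2). Then the optimal success probability of unambiguous discrimination of the qubit measurements 𝒫_𝟙 and 𝒫_U without the use of entanglement is p_u(𝒫_𝟙, 𝒫_U) = 1 if |U₁₂|² = 1, and p_u(𝒫_𝟙, 𝒫_U) = |U₁₂|²/2 if |U₁₂|² < 1, where U₁₂ = ⟨1|U|2⟩. In both cases the optimum is attained with input state |1⟩⟨1|. -/

import Mathlib

open Matrix MeasureTheory
open scoped ENNReal ComplexOrder

noncomputable section

namespace Paper

/-- Trace norm `‖X‖₁ = Tr √(Xᴴ X)`. -/
noncomputable def traceNorm {n : Type*} [Fintype n] [DecidableEq n] (X : Matrix n n ℂ) : ℝ :=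
  (((Matrix.posSemidef_conjTranspose_mul_self X).1.eigenvectorUnitary : Matrix n n ℂ) *
      Matrix.diagonal (fun i => ((Real.sqrt ((Matrix.posSemidef_conjTranspose_mul_self X).1.eigenvalues i) : ℝ) : ℂ)) *
      (star ((Matrix.posSemidef_conjTranspose_mul_self X).1.eigenvectorUnitary : Matrix n n ℂ))).trace.re

/-- `(S ⊗ id)(X)`, the map `S` applied to the first tensor factor. -/
def tensorApplyLeft {n n' m : Type*} [Fintype n] [Fintype m]
    (S : Matrix n n ℂ →ₗ[ℂ] Matrix n' n' ℂ)
    (X : Matrix (n × m) (n × m) ℂ) : Matrix (n' × m) (n' × m) ℂ :=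
  Matrix.of fun p q => S (Matrix.of fun i j => X (i, p.2) (j, q.2)) p.1 q.1

/-- Diamond norm of a linear map between matrix spaces. -/
noncomputable def diamondNorm {n n' : Type*} [Fintype n] [DecidableEq n] [Fintype n']
    [DecidableEq n'] (S : Matrix n n ℂ →ₗ[ℂ] Matrix n' n' ℂ) : ℝ :=
  sSup { t : ℝ | ∃ (k : ℕ) (X : Matrix (n × Fin (k + 1)) (n × Fin (k + 1)) ℂ),
    traceNorm X = 1 ∧ t = traceNorm (tensorApplyLeft S X) }

/-- The completely dephasing channel in the standard basis. -/
def dephaseMap (n : Type*) [Fintype n] [DecidableEq n] :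
    Matrix n n ℂ →ₗ[ℂ] Matrix n n ℂ where
  toFun X := Matrix.diagonal fun i => X i i
  map_add' X Y := by
    ext i j
    by_cases h : i = j <;> simp [Matrix.diagonal_apply, h]
  map_smul' c X := by
    ext i j
    by_cases h : i = j <;> simp [Matrix.diagonal_apply, h]

/-- The unitary channel `Φ_U(X) = U X Uᴴ`. -/
def unitaryChannel {n : Type*} [Fintype n] (U : Matrix n n ℂ) :
    Matrix n n ℂ →ₗ[ℂ] Matrix n n ℂ where
  toFun X := U * X * Uᴴ
  map_add' X Y := by simp [Matrix.mul_add, Matrix.add_mul]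
  map_smul' c X := by simp [mul_smul_comm, smul_mul_assoc]

/-- The von Neumann measurement channel `𝒫_U(σ) = Σ_i ⟨i|U† σ U|i⟩ |i⟩⟨i| = diag(U† σ U)`. -/
def measChannel {n : Type*} [Fintype n] [DecidableEq n] (U : Matrix n n ℂ) :
    Matrix n n ℂ →ₗ[ℂ] Matrix n n ℂ :=
  (dephaseMap n).comp (unitaryChannel Uᴴ)

/-- `N`-fold tensor (Kronecker) power of a matrix. -/
def tensorPow {d : ℕ} (U : Matrix (Fin d) (Fin d) ℂ) (N : ℕ) :
    Matrix (Fin N → Fin d) (Fin N → Fin d) ℂ :=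
  Matrix.of fun f g => ∏ k, U (f k) (g k)

/-- Tensor product of a family of `d × d` matrices. -/
def tensorFamily {d N : ℕ} (ρ : Fin N → Matrix (Fin d) (Fin d) ℂ) :
    Matrix (Fin N → Fin d) (Fin N → Fin d) ℂ :=
  Matrix.of fun f g => ∏ k, (ρ k) (f k) (g k)

/-- Density matrices. -/
def IsDensityMatrix {n : Type*} [Fintype n] (ρ : Matrix n n ℂ) : Prop :=
  ρ.PosSemidef ∧ ρ.trace = 1

/-- The set of diagonal unitary matrices `𝒟𝒰`. -/
def diagUnitary (n : Type*) [Fintype n] [DecidableEq n] : Set (Matrix n n ℂ) :=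
  { E | E ∈ Matrix.unitaryGroup n ℂ ∧ E.IsDiag }

/-- `Θ(U)`: the angle of the shortest arc of the unit circle containing all eigenvalues. -/
noncomputable def thetaArc {n : Type*} [Fintype n] [DecidableEq n] (U : Matrix n n ℂ) : ℝ :=
  sInf { t : ℝ | 0 ≤ t ∧ ∃ α : ℝ, ∀ lam ∈ spectrum ℂ U, ∃ s : ℝ, 0 ≤ s ∧ s ≤ t ∧
    lam = Complex.exp (Complex.I * (↑α + ↑s)) }

/-- `Υ(U) = min_{E ∈ 𝒟𝒰} Θ(UE)`. -/
noncomputable def upsilonArc {n : Type*} [Fintype n] [DecidableEq n] (U : Matrix n n ℂ) : ℝ :=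
  sInf { t : ℝ | ∃ E ∈ diagUnitary n, t = thetaArc (U * E) }

/-- Numerical range `W(A)`. -/
def numericalRange {n : Type*} [Fintype n] (A : Matrix n n ℂ) : Set ℂ :=
  { z | ∃ x : n → ℂ, (∑ i, ‖x i‖ ^ 2) = 1 ∧ z = star x ⬝ᵥ A.mulVec x }

/-- minimal modulus over the numerical range -/
noncomputable def nuMin {n : Type*} [Fintype n] (A : Matrix n n ℂ) : ℝ :=
  sInf { r : ℝ | ∃ z ∈ numericalRange A, r = ‖z‖ }

/-- Operator (spectral) norm of a matrix. -/
noncomputable def opNorm {n : Type*} [Fintype n] [DecidableEq n] (A : Matrix n n ℂ) : ℝ :=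
  ‖Matrix.toEuclideanCLM (𝕜 := ℂ) A‖

/-- Matrix of the orthogonal projection onto a subspace of `EuclideanSpace ℂ n`. -/
noncomputable def projMatrix {n : Type*} [Fintype n] [DecidableEq n]
    (K : Submodule ℂ (EuclideanSpace ℂ n)) : Matrix n n ℂ :=
  Matrix.toEuclideanLin.symm (K.subtype ∘ₗ (K.orthogonalProjectionOnto).toLinearMap)

/-- Matrix of the orthogonal projection onto the eigenspace of `A` for eigenvalue `lam`. -/
noncomputable def eigProj {n : Type*} [Fintype n] [DecidableEq n] (A : Matrix n n ℂ) (lam : ℂ) :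
    Matrix n n ℂ :=
  projMatrix (Module.End.eigenspace (Matrix.toEuclideanLin A) lam)

end Paper

namespace Paper

/-- Optimal unambiguous discrimination probability of `𝒫_𝟙` vs `𝒫_U` without entanglement. -/
noncomputable def puNoEnt {n : Type*} [Fintype n] [DecidableEq n] (U : Matrix n n ℂ) : ℝ :=
  sSup { t : ℝ | ∃ σ M₁ M₂ M₃ : Matrix n n ℂ,
    IsDensityMatrix σ ∧ M₁.PosSemidef ∧ M₂.PosSemidef ∧ M₃.PosSemidef ∧ M₁ + M₂ + M₃ = 1 ∧
    (M₂ * measChannel (1 : Matrix n n ℂ) σ).trace = 0 ∧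
    (M₁ * measChannel U σ).trace = 0 ∧
    t = (1 / 2) * (((M₁ * measChannel (1 : Matrix n n ℂ) σ).trace).re +
                   ((M₂ * measChannel U σ).trace).re) }

/-- Optimal entanglement-assisted unambiguous discrimination probability of `𝒫_𝟙` vs `𝒫_U`. -/
noncomputable def puEnt {n : Type*} [Fintype n] [DecidableEq n] (U : Matrix n n ℂ) : ℝ :=
  sSup { t : ℝ | ∃ (k : ℕ) (σ M₁ M₂ M₃ : Matrix (n × Fin (k + 1)) (n × Fin (k + 1)) ℂ),
    IsDensityMatrix σ ∧ M₁.PosSemidef ∧ M₂.PosSemidef ∧ M₃.PosSemidef ∧ M₁ + M₂ + M₃ = 1 ∧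
    (M₂ * tensorApplyLeft (measChannel (1 : Matrix n n ℂ)) σ).trace = 0 ∧
    (M₁ * tensorApplyLeft (measChannel U) σ).trace = 0 ∧
    t = (1 / 2) * (((M₁ * tensorApplyLeft (measChannel (1 : Matrix n n ℂ)) σ).trace).re +
                   ((M₂ * tensorApplyLeft (measChannel U) σ).trace).re) }

/-- `Π_A = Σ_{i ∈ A} |i⟩⟨i|`. -/
noncomputable def basisProj {n : Type*} [Fintype n] [DecidableEq n] (A : Finset n) :
    Matrix n n ℂ :=
  ∑ i ∈ A, Matrix.single i i (1 : ℂ)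

/-- `ℙ_{Γ,Δ}`: projector onto `span{U|i⟩ : i ∈ Γᶜ} ∩ span{|j⟩ : j ∈ Δᶜ}`. -/
noncomputable def PGD {n : Type*} [Fintype n] [DecidableEq n] (U : Matrix n n ℂ)
    (Γ Δ : Finset n) : Matrix n n ℂ :=
  projMatrix
    ((Submodule.span ℂ { v : EuclideanSpace ℂ n |
        ∃ i ∉ Γ, v = (WithLp.equiv 2 (n → ℂ)).symm (fun r => U r i) }) ⊓
     (Submodule.span ℂ { v : EuclideanSpace ℂ n |
        ∃ j ∉ Δ, v = (WithLp.equiv 2 (n → ℂ)).symm (Pi.single j 1) }))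

/-- `W` acting on the `k`-th of `N` registers (identity elsewhere). -/
def actOn {d : ℕ} (N : ℕ) (W : Matrix (Fin d) (Fin d) ℂ) (k : ℕ) :
    Matrix (Fin N → Fin d) (Fin N → Fin d) ℂ :=
  Matrix.of fun f g => ∏ j : Fin N,
    if (j : ℕ) = k then W (f j) (g j) else (if f j = g j then (1 : ℂ) else 0)

/-- A system operator extended by identity on the ancilla. -/
def sysOp {d N m : ℕ} (A : Matrix (Fin N → Fin d) (Fin N → Fin d) ℂ) :
    Matrix ((Fin N → Fin d) × Fin m) ((Fin N → Fin d) × Fin m) ℂ :=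
  Matrix.of fun p q => A p.1 q.1 * (if p.2 = q.2 then (1 : ℂ) else 0)

/-- `C` is classically controlled on the first `k` registers, i.e. of the form
`Σ_{i₁,…,i_k} |i₁…i_k⟩⟨i₁…i_k| ⊗ V_{i₁…i_k}`. -/
def ControlledOnFirst {d N m : ℕ} (k : ℕ)
    (C : Matrix ((Fin N → Fin d) × Fin m) ((Fin N → Fin d) × Fin m) ℂ) : Prop :=
  ∀ p q, (∃ j : Fin N, (j : ℕ) < k ∧ p.1 j ≠ q.1 j) → C p q = 0

/-- The sequential-scheme unitary
`A_W = (𝟙⊗…⊗W⊗𝟙ₘ)·C_{N-1}·…·C₁·(W⊗𝟙⊗…⊗𝟙ₘ)`. -/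
noncomputable def seqUnitary {d N m : ℕ} (W : Matrix (Fin d) (Fin d) ℂ)
    (C : ℕ → Matrix ((Fin N → Fin d) × Fin m) ((Fin N → Fin d) × Fin m) ℂ) :
    Matrix ((Fin N → Fin d) × Fin m) ((Fin N → Fin d) × Fin m) ℂ :=
  (((List.range (N - 1)).reverse.map fun j =>
      sysOp (actOn N W (j + 1)) * C (j + 1)).prod) * sysOp (actOn N W 0)

/-- Dephasing in the standard product basis on the first `N` registers only. -/
def dephaseFirst (d N m : ℕ) :
    Matrix ((Fin N → Fin d) × Fin m) ((Fin N → Fin d) × Fin m) ℂ →ₗ[ℂ]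
    Matrix ((Fin N → Fin d) × Fin m) ((Fin N → Fin d) × Fin m) ℂ where
  toFun X := Matrix.of fun p q => if p.1 = q.1 then X p q else 0
  map_add' X Y := by
    ext p q
    by_cases h : p.1 = q.1 <;> simp [h]
  map_smul' c X := by
    ext p q
    by_cases h : p.1 = q.1 <;> simp [h]

/-- The Hadamard matrix. -/
noncomputable def Hmat : Matrix (Fin 2) (Fin 2) ℂ :=
  (((1 : ℝ) / Real.sqrt 2 : ℝ) : ℂ) • !![1, 1; 1, -1]

/-- `ψ = (|1⟩⊗|1⟩ − |2⟩⊗|2⟩)/√2`. -/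
noncomputable def psiVec : Fin 2 × Fin 2 → ℂ := fun p =>
  if p = (0, 0) then (((1 : ℝ) / Real.sqrt 2 : ℝ) : ℂ)
  else if p = (1, 1) then -(((1 : ℝ) / Real.sqrt 2 : ℝ) : ℂ) else 0

/-- `ρ = |ψ⟩⟨ψ|`. -/
noncomputable def rhoPsi : Matrix (Fin 2 × Fin 2) (Fin 2 × Fin 2) ℂ :=
  Matrix.of fun p q => psiVec p * (starRingEnd ℂ) (psiVec q)

end Paper

namespace Paper

private lemma sand (A B : Matrix (Fin 2) (Fin 2) ℂ) (k i j : Fin 2) :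
    (A * Matrix.single k k (1:ℂ) * B) i j = A i k * B k j := by
  fin_cases k <;>
    simp [Matrix.mul_apply, Fin.sum_univ_two, Matrix.single, Matrix.of_apply]

private lemma diag_nn {A : Matrix (Fin 2) (Fin 2) ℂ} (hA : A.PosSemidef) (i : Fin 2) :
    0 ≤ A i i := by
  exact hA.diag_nonneg

private lemma real_of_nn {z : ℂ} (h : 0 ≤ z) : z = (z.re : ℂ) ∧ 0 ≤ z.re := by
  rw [Complex.le_def] at h
  exact ⟨by apply Complex.ext <;> simp [h.2.symm], h.1⟩

private lemma psd00 {A : Matrix (Fin 2) (Fin 2) ℂ} (hA : A.PosSemidef) (ht : A.trace = 1)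
    (h : A 0 0 = 0) : A = Matrix.single 1 1 1 := by
  open scoped MatrixOrder in
  obtain ⟨B, hB⟩ := CStarAlgebra.nonneg_iff_eq_star_mul_self.mp hA.nonneg
  rw [Matrix.star_eq_conjTranspose] at hB; subst hB
  have e : ∀ i j : Fin 2, (Bᴴ * B) i j
      = (starRingEnd ℂ) (B 0 i) * B 0 j + (starRingEnd ℂ) (B 1 i) * B 1 j := by
    intro i j
    simp [Matrix.mul_apply, Fin.sum_univ_two, Matrix.conjTranspose_apply]
  have h0 : (starRingEnd ℂ) (B 0 0) * B 0 0 + (starRingEnd ℂ) (B 1 0) * B 1 0 = 0 := by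
    rw [← e 0 0]; exact h
  have h0' : Complex.normSq (B 0 0) + Complex.normSq (B 1 0) = 0 := by
    have := congrArg Complex.re h0
    simpa [Complex.normSq_apply, Complex.mul_re] using this
  have hb0 : B 0 0 = 0 := by
    have := Complex.normSq_nonneg (B 0 0)
    have := Complex.normSq_nonneg (B 1 0)
    exact Complex.normSq_eq_zero.mp (by linarith)
  have hb1 : B 1 0 = 0 := by
    have := Complex.normSq_nonneg (B 0 0)
    have := Complex.normSq_nonneg (B 1 0)
    exact Complex.normSq_eq_zero.mp (by linarith)
  have htr : (Bᴴ * B) 0 0 + (Bᴴ * B) 1 1 = 1 := by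
    simpa [Matrix.trace, Fin.sum_univ_two] using ht
  have h11 : (Bᴴ * B) 1 1 = 1 := by rw [h] at htr; linear_combination htr
  ext i j
  fin_cases i <;> fin_cases j
  · simpa [Matrix.single, Matrix.of_apply] using h
  · simp [e, hb0, hb1, Matrix.single, Matrix.of_apply]
  · simp [e, hb0, hb1, Matrix.single, Matrix.of_apply]
  · simpa [Matrix.single, Matrix.of_apply] using h11

private lemma psd11 {A : Matrix (Fin 2) (Fin 2) ℂ} (hA : A.PosSemidef) (ht : A.trace = 1)
    (h : A 1 1 = 0) : A = Matrix.single 0 0 1 := by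
  open scoped MatrixOrder in
  obtain ⟨B, hB⟩ := CStarAlgebra.nonneg_iff_eq_star_mul_self.mp hA.nonneg
  rw [Matrix.star_eq_conjTranspose] at hB; subst hB
  have e : ∀ i j : Fin 2, (Bᴴ * B) i j
      = (starRingEnd ℂ) (B 0 i) * B 0 j + (starRingEnd ℂ) (B 1 i) * B 1 j := by
    intro i j
    simp [Matrix.mul_apply, Fin.sum_univ_two, Matrix.conjTranspose_apply]
  have h0 : (starRingEnd ℂ) (B 0 1) * B 0 1 + (starRingEnd ℂ) (B 1 1) * B 1 1 = 0 := by
    rw [← e 1 1]; exact h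
  have h0' : Complex.normSq (B 0 1) + Complex.normSq (B 1 1) = 0 := by
    have := congrArg Complex.re h0
    simpa [Complex.normSq_apply, Complex.mul_re] using this
  have hb0 : B 0 1 = 0 := by
    have := Complex.normSq_nonneg (B 0 1)
    have := Complex.normSq_nonneg (B 1 1)
    exact Complex.normSq_eq_zero.mp (by linarith)
  have hb1 : B 1 1 = 0 := by
    have := Complex.normSq_nonneg (B 0 1)
    have := Complex.normSq_nonneg (B 1 1)
    exact Complex.normSq_eq_zero.mp (by linarith)
  have htr : (Bᴴ * B) 0 0 + (Bᴴ * B) 1 1 = 1 := by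
    simpa [Matrix.trace, Fin.sum_univ_two] using ht
  have h00 : (Bᴴ * B) 0 0 = 1 := by rw [h] at htr; linear_combination htr
  ext i j
  fin_cases i <;> fin_cases j
  · simpa [Matrix.single, Matrix.of_apply] using h00
  · simp [e, hb0, hb1, Matrix.single, Matrix.of_apply]
  · simp [e, hb0, hb1, Matrix.single, Matrix.of_apply]
  · simpa [Matrix.single, Matrix.of_apply] using h

private lemma measChannel_eq (U σ : Matrix (Fin 2) (Fin 2) ℂ) :
    measChannel U σ = Matrix.diagonal (fun i => (Uᴴ * σ * U) i i) := by
  simp [measChannel, dephaseMap, unitaryChannel, LinearMap.comp_apply]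

private lemma measChannel_one (σ : Matrix (Fin 2) (Fin 2) ℂ) :
    measChannel (1 : Matrix (Fin 2) (Fin 2) ℂ) σ = Matrix.diagonal (fun i => σ i i) := by
  rw [measChannel_eq]
  simp

private lemma trace_mul_diag (M : Matrix (Fin 2) (Fin 2) ℂ) (d : Fin 2 → ℂ) :
    (M * Matrix.diagonal d).trace = M 0 0 * d 0 + M 1 1 * d 1 := by
  simp [Matrix.trace, Fin.sum_univ_two, Matrix.mul_diagonal, Matrix.diag]

private lemma psdE (i : Fin 2) : (Matrix.single i i (1:ℂ)).PosSemidef := by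
  convert Matrix.posSemidef_conjTranspose_mul_self (Matrix.single i i (1:ℂ)) using 1
  ext r s
  fin_cases i <;> fin_cases r <;> fin_cases s <;>
    simp [Matrix.mul_apply, Fin.sum_univ_two, Matrix.conjTranspose_apply,
      Matrix.single, Matrix.of_apply]

end Paper

namespace Paper

set_option maxHeartbeats 4000000 in
theorem stmt8 (U : Matrix (Fin 2) (Fin 2) ℂ) (hU : U ∈ Matrix.unitaryGroup (Fin 2) ℂ) :
    (‖U 0 1‖ ^ 2 = 1 → puNoEnt U = 1) ∧
    (‖U 0 1‖ ^ 2 < 1 → puNoEnt U = ‖U 0 1‖ ^ 2 / 2) ∧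
    (∃ M₁ M₂ M₃ : Matrix (Fin 2) (Fin 2) ℂ,
      M₁.PosSemidef ∧ M₂.PosSemidef ∧ M₃.PosSemidef ∧ M₁ + M₂ + M₃ = 1 ∧
      (M₂ * measChannel (1 : Matrix (Fin 2) (Fin 2) ℂ)
        (Matrix.single (0 : Fin 2) (0 : Fin 2) (1 : ℂ))).trace = 0 ∧
      (M₁ * measChannel U (Matrix.single (0 : Fin 2) (0 : Fin 2) (1 : ℂ))).trace = 0 ∧
      (1 / 2) * (((M₁ * measChannel (1 : Matrix (Fin 2) (Fin 2) ℂ)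
          (Matrix.single (0 : Fin 2) (0 : Fin 2) (1 : ℂ))).trace).re +
        ((M₂ * measChannel U (Matrix.single (0 : Fin 2) (0 : Fin 2) (1 : ℂ))).trace).re) =
        puNoEnt U) := by
  classical
  have hA : Uᴴ * U = 1 := by simpa [Matrix.star_eq_conjTranspose] using hU.1
  have hB : U * Uᴴ = 1 := by simpa [Matrix.star_eq_conjTranspose] using hU.2
  -- real unitarity relations
  have hrow : Complex.normSq (U 0 0) + Complex.normSq (U 0 1) = 1 := by
    have h' := congrFun (congrFun hB 0) 0
    simp only [Matrix.mul_apply, Fin.sum_univ_two, Matrix.conjTranspose_apply,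
      Matrix.one_apply_eq] at h'
    simp only [← starRingEnd_apply] at h'
    rw [Complex.mul_conj, Complex.mul_conj] at h'
    exact_mod_cast h'
  have hrow2 : Complex.normSq (U 1 0) + Complex.normSq (U 1 1) = 1 := by
    have h' := congrFun (congrFun hB 1) 1
    simp only [Matrix.mul_apply, Fin.sum_univ_two, Matrix.conjTranspose_apply,
      Matrix.one_apply_eq] at h'
    simp only [← starRingEnd_apply] at h'
    rw [Complex.mul_conj, Complex.mul_conj] at h'
    exact_mod_cast h'
  have hcol : Complex.normSq (U 0 0) + Complex.normSq (U 1 0) = 1 := by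
    have h' := congrFun (congrFun hA 0) 0
    simp only [Matrix.mul_apply, Fin.sum_univ_two, Matrix.conjTranspose_apply,
      Matrix.one_apply_eq] at h'
    simp only [← starRingEnd_apply] at h'
    rw [← Complex.normSq_eq_conj_mul_self, ← Complex.normSq_eq_conj_mul_self] at h'
    exact_mod_cast h'
  have hU10 : Complex.normSq (U 1 0) = Complex.normSq (U 0 1) := by linarith
  have hU11 : Complex.normSq (U 1 1) = Complex.normSq (U 0 0) := by linarith
  have habs : ‖U 0 1‖ ^ 2 = Complex.normSq (U 0 1) := Complex.sq_norm _
  have hale : Complex.normSq (U 0 1) ≤ 1 := by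
    have := Complex.normSq_nonneg (U 0 0); linarith
  -- the upper bound
  have upper : ∀ t : ℝ, (∃ σ M₁ M₂ M₃ : Matrix (Fin 2) (Fin 2) ℂ,
      IsDensityMatrix σ ∧ M₁.PosSemidef ∧ M₂.PosSemidef ∧ M₃.PosSemidef ∧ M₁ + M₂ + M₃ = 1 ∧
      (M₂ * measChannel (1 : Matrix (Fin 2) (Fin 2) ℂ) σ).trace = 0 ∧
      (M₁ * measChannel U σ).trace = 0 ∧
      t = (1 / 2) * (((M₁ * measChannel (1 : Matrix (Fin 2) (Fin 2) ℂ) σ).trace).re +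
                     ((M₂ * measChannel U σ).trace).re)) →
      t ≤ 1 ∧ (Complex.normSq (U 0 1) < 1 → t ≤ Complex.normSq (U 0 1) / 2) := by
    rintro t ⟨σ, M₁, M₂, M₃, ⟨hσP, hσt⟩, h1, h2, h3, hsum, hc1, hc2, hteq⟩
    have hTP : (Uᴴ * σ * U).PosSemidef := hσP.conjTranspose_mul_mul_same U
    have hTt : (Uᴴ * σ * U).trace = 1 := by
      rw [Matrix.trace_mul_comm, ← Matrix.mul_assoc, hB, Matrix.one_mul, hσt]
    have hσT : σ = U * (Uᴴ * σ * U) * Uᴴ := by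
      simp only [← Matrix.mul_assoc]
      rw [hB, Matrix.one_mul, Matrix.mul_assoc, hB, Matrix.mul_one]
    obtain ⟨eσ0, hp0⟩ := real_of_nn (diag_nn hσP 0)
    obtain ⟨eσ1, hp1⟩ := real_of_nn (diag_nn hσP 1)
    obtain ⟨eT0, hq0⟩ := real_of_nn (diag_nn hTP 0)
    obtain ⟨eT1, hq1⟩ := real_of_nn (diag_nn hTP 1)
    obtain ⟨eM10, hm0⟩ := real_of_nn (diag_nn h1 0)
    obtain ⟨eM11, hm1⟩ := real_of_nn (diag_nn h1 1)
    obtain ⟨eM20, hn0⟩ := real_of_nn (diag_nn h2 0)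
    obtain ⟨eM21, hn1⟩ := real_of_nn (diag_nn h2 1)
    obtain ⟨_, hr0⟩ := real_of_nn (diag_nn h3 0)
    obtain ⟨_, hr1⟩ := real_of_nn (diag_nn h3 1)
    have hps : (σ 0 0).re + (σ 1 1).re = 1 := by
      have := congrArg Complex.re hσt
      simpa [Matrix.trace, Fin.sum_univ_two, Matrix.diag] using this
    have hqs : ((Uᴴ * σ * U) 0 0).re + ((Uᴴ * σ * U) 1 1).re = 1 := by
      have := congrArg Complex.re hTt
      simpa [Matrix.trace, Fin.sum_univ_two, Matrix.diag] using this
    have hms : ∀ i : Fin 2, (M₁ i i).re + (M₂ i i).re + (M₃ i i).re = 1 := by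
      intro i
      have := congrArg Complex.re (congrFun (congrFun hsum i) i)
      simpa [Matrix.add_apply, Matrix.one_apply_eq] using this
    have hm0le : (M₁ 0 0).re ≤ 1 := by have := hms 0; linarith
    have hm1le : (M₁ 1 1).re ≤ 1 := by have := hms 1; linarith
    have hn0le : (M₂ 0 0).re ≤ 1 := by have := hms 0; linarith
    have hn1le : (M₂ 1 1).re ≤ 1 := by have := hms 1; linarith
    rw [measChannel_one, trace_mul_diag] at hc1
    rw [measChannel_eq, trace_mul_diag] at hc2
    rw [measChannel_one, measChannel_eq, trace_mul_diag, trace_mul_diag] at hteq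
    have hc1' : (M₂ 0 0).re * (σ 0 0).re + (M₂ 1 1).re * (σ 1 1).re = 0 := by
      have := congrArg Complex.re hc1
      rw [eM20, eM21, eσ0, eσ1] at this
      simpa [← Complex.ofReal_mul, ← Complex.ofReal_add] using this
    have hc2' : (M₁ 0 0).re * ((Uᴴ * σ * U) 0 0).re
        + (M₁ 1 1).re * ((Uᴴ * σ * U) 1 1).re = 0 := by
      have := congrArg Complex.re hc2
      rw [eM10, eM11, eT0, eT1] at this
      simpa [← Complex.ofReal_mul, ← Complex.ofReal_add] using this
    have hz20 : (M₂ 0 0).re * (σ 0 0).re = 0 := by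
      nlinarith [mul_nonneg hn0 hp0, mul_nonneg hn1 hp1]
    have hz21 : (M₂ 1 1).re * (σ 1 1).re = 0 := by
      nlinarith [mul_nonneg hn0 hp0, mul_nonneg hn1 hp1]
    have hz10 : (M₁ 0 0).re * ((Uᴴ * σ * U) 0 0).re = 0 := by
      nlinarith [mul_nonneg hm0 hq0, mul_nonneg hm1 hq1]
    have hz11 : (M₁ 1 1).re * ((Uᴴ * σ * U) 1 1).re = 0 := by
      nlinarith [mul_nonneg hm0 hq0, mul_nonneg hm1 hq1]
    have hteq' : t = 1/2 * ((M₁ 0 0).re * (σ 0 0).re + (M₁ 1 1).re * (σ 1 1).re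
        + ((M₂ 0 0).re * ((Uᴴ * σ * U) 0 0).re + (M₂ 1 1).re * ((Uᴴ * σ * U) 1 1).re)) := by
      rw [hteq, eM10, eM11, eM20, eM21, eσ0, eσ1, eT0, eT1]
      simp [← Complex.ofReal_mul, ← Complex.ofReal_add]
    constructor
    · nlinarith [mul_nonneg (sub_nonneg.mpr hm0le) hp0, mul_nonneg (sub_nonneg.mpr hm1le) hp1,
        mul_nonneg (sub_nonneg.mpr hn0le) hq0, mul_nonneg (sub_nonneg.mpr hn1le) hq1]
    · intro ha1
      rcases eq_or_lt_of_le hq0 with hq0z | hq0pos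
      · -- q0 = 0
        have hT00 : (Uᴴ * σ * U) 0 0 = 0 := by rw [eT0, ← hq0z]; simp
        have hTsb : Uᴴ * σ * U = Matrix.single 1 1 1 := psd00 hTP hTt hT00
        have hσ00 : σ 0 0 = U 0 1 * (starRingEnd ℂ) (U 0 1) := by
          conv_lhs => rw [hσT, hTsb]
          rw [sand]
          simp [Matrix.conjTranspose_apply]
        have hp0a : (σ 0 0).re = Complex.normSq (U 0 1) := by
          rw [hσ00, Complex.mul_conj]; simp
        rcases eq_or_lt_of_le hp1 with hp1z | hp1pos
        · -- p1 = 0 : contradiction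
          have hσ11 : σ 1 1 = 0 := by rw [eσ1, ← hp1z]; simp
          have hσsb : σ = Matrix.single 0 0 1 := psd11 hσP hσt hσ11
          have hT00' : (Uᴴ * σ * U) 0 0 = (starRingEnd ℂ) (U 0 0) * U 0 0 := by
            rw [hσsb, sand]
            simp [Matrix.conjTranspose_apply]
          have : ((Uᴴ * σ * U) 0 0).re = Complex.normSq (U 0 0) := by
            rw [hT00', ← Complex.normSq_eq_conj_mul_self]; simp
          rw [hT00] at this
          simp at this
          linarith
        · have hn1z : (M₂ 1 1).re = 0 := by
            rcases mul_eq_zero.mp hz21 with h | h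
            · exact h
            · exact absurd h (by linarith)
          have hq1one : ((Uᴴ * σ * U) 1 1).re = 1 := by linarith
          have hm1z : (M₁ 1 1).re = 0 := by
            rcases mul_eq_zero.mp hz11 with h | h
            · exact h
            · rw [h] at hq1one; norm_num at hq1one
          rw [hteq', hm1z, hn1z, ← hq0z, hp0a]
          nlinarith [mul_nonneg hm0 hp0]
      · rcases eq_or_lt_of_le hq1 with hq1z | hq1pos
        · -- q1 = 0
          have hT11 : (Uᴴ * σ * U) 1 1 = 0 := by rw [eT1, ← hq1z]; simp
          have hTsb : Uᴴ * σ * U = Matrix.single 0 0 1 := psd11 hTP hTt hT11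
          have hσ11 : σ 1 1 = U 1 0 * (starRingEnd ℂ) (U 1 0) := by
            conv_lhs => rw [hσT, hTsb]
            rw [sand]
            simp [Matrix.conjTranspose_apply]
          have hp1a : (σ 1 1).re = Complex.normSq (U 0 1) := by
            rw [hσ11, Complex.mul_conj, ← hU10]; simp
          rcases eq_or_lt_of_le hp0 with hp0z | hp0pos
          · -- p0 = 0 : contradiction
            have hσ00' : σ 0 0 = 0 := by rw [eσ0, ← hp0z]; simp
            have hσsb : σ = Matrix.single 1 1 1 := psd00 hσP hσt hσ00'
            have hT11' : (Uᴴ * σ * U) 1 1 = (starRingEnd ℂ) (U 1 1) * U 1 1 := by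
              rw [hσsb, sand]
              simp [Matrix.conjTranspose_apply]
            have : ((Uᴴ * σ * U) 1 1).re = Complex.normSq (U 1 1) := by
              rw [hT11', ← Complex.normSq_eq_conj_mul_self]; simp
            rw [hT11] at this
            simp at this
            rw [hU11] at this
            linarith
          · have hn0z : (M₂ 0 0).re = 0 := by
              rcases mul_eq_zero.mp hz20 with h | h
              · exact h
              · exact absurd h (by linarith)
            have hq0one : ((Uᴴ * σ * U) 0 0).re = 1 := by linarith
            have hm0z : (M₁ 0 0).re = 0 := by
              rcases mul_eq_zero.mp hz10 with h | h
              · exact h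
              · rw [h] at hq0one; norm_num at hq0one
            rw [hteq', hm0z, hn0z, ← hq1z, hp1a]
            nlinarith [mul_nonneg hm1 hp1]
        · -- q0 > 0, q1 > 0
          have hm0z : (M₁ 0 0).re = 0 := by
            rcases mul_eq_zero.mp hz10 with h | h
            · exact h
            · exact absurd h (by linarith)
          have hm1z : (M₁ 1 1).re = 0 := by
            rcases mul_eq_zero.mp hz11 with h | h
            · exact h
            · exact absurd h (by linarith)
          rcases eq_or_lt_of_le hp0 with hp0z | hp0pos
          · -- p0 = 0 : sigma = E11
            have hσ00' : σ 0 0 = 0 := by rw [eσ0, ← hp0z]; simp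
            have hσsb : σ = Matrix.single 1 1 1 := psd00 hσP hσt hσ00'
            have hT00' : (Uᴴ * σ * U) 0 0 = (starRingEnd ℂ) (U 1 0) * U 1 0 := by
              rw [hσsb, sand]
              simp [Matrix.conjTranspose_apply]
            have hq0a : ((Uᴴ * σ * U) 0 0).re = Complex.normSq (U 0 1) := by
              rw [hT00', ← Complex.normSq_eq_conj_mul_self, ← hU10]; simp
            have hn1z : (M₂ 1 1).re = 0 := by
              rcases mul_eq_zero.mp hz21 with h | h
              · exact h
              · exfalso; rw [h] at hps; linarith
            rw [hteq', hm0z, hm1z, hn1z, hq0a]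
            nlinarith
          · rcases eq_or_lt_of_le hp1 with hp1z | hp1pos
            · -- p1 = 0 : sigma = E00
              have hσ11' : σ 1 1 = 0 := by rw [eσ1, ← hp1z]; simp
              have hσsb : σ = Matrix.single 0 0 1 := psd11 hσP hσt hσ11'
              have hT11' : (Uᴴ * σ * U) 1 1 = (starRingEnd ℂ) (U 0 1) * U 0 1 := by
                rw [hσsb, sand]
                simp [Matrix.conjTranspose_apply]
              have hq1a : ((Uᴴ * σ * U) 1 1).re = Complex.normSq (U 0 1) := by
                rw [hT11', ← Complex.normSq_eq_conj_mul_self]; simp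
              have hn0z : (M₂ 0 0).re = 0 := by
                rcases mul_eq_zero.mp hz20 with h | h
                · exact h
                · exfalso; rw [h] at hps; linarith
              rw [hteq', hm0z, hm1z, hn0z, hq1a]
              nlinarith
            · have hn0z : (M₂ 0 0).re = 0 := by
                rcases mul_eq_zero.mp hz20 with h | h
                · exact h
                · exact absurd h (by linarith)
              have hn1z : (M₂ 1 1).re = 0 := by
                rcases mul_eq_zero.mp hz21 with h | h
                · exact h
                · exact absurd h (by linarith)
              rw [hteq', hm0z, hm1z, hn0z, hn1z]
              nlinarith [Complex.normSq_nonneg (U 0 1)]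
  -- witness computations, with σ₀ = |0⟩⟨0|
  have hσ0D : IsDensityMatrix (Matrix.single (0 : Fin 2) (0 : Fin 2) (1 : ℂ)) := by
    refine ⟨psdE 0, ?_⟩
    simp [Matrix.trace, Fin.sum_univ_two, Matrix.diag, Matrix.single, Matrix.of_apply]
  have hmeas1 : measChannel (1 : Matrix (Fin 2) (Fin 2) ℂ)
      (Matrix.single (0 : Fin 2) (0 : Fin 2) (1 : ℂ))
      = Matrix.diagonal (fun i => (Matrix.single (0 : Fin 2) (0 : Fin 2) (1 : ℂ)) i i) :=
    measChannel_one _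
  have hmeasU : measChannel U (Matrix.single (0 : Fin 2) (0 : Fin 2) (1 : ℂ))
      = Matrix.diagonal (fun i =>
          (Uᴴ * Matrix.single (0 : Fin 2) (0 : Fin 2) (1 : ℂ) * U) i i) :=
    measChannel_eq _ _
  have hTe : ∀ i : Fin 2,
      (Uᴴ * Matrix.single (0 : Fin 2) (0 : Fin 2) (1 : ℂ) * U) i i
        = (starRingEnd ℂ) (U 0 i) * U 0 i := by
    intro i
    rw [sand]
    simp [Matrix.conjTranspose_apply]
  have e1 : ((Matrix.single (1 : Fin 2) (1 : Fin 2) (1 : ℂ)) *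
      measChannel (1 : Matrix (Fin 2) (Fin 2) ℂ)
        (Matrix.single (0 : Fin 2) (0 : Fin 2) (1 : ℂ))).trace = 0 := by
    rw [hmeas1, trace_mul_diag]
    simp [Matrix.single, Matrix.of_apply]
  have e3 : ((Matrix.single (1 : Fin 2) (1 : Fin 2) (1 : ℂ)) *
      measChannel U (Matrix.single (0 : Fin 2) (0 : Fin 2) (1 : ℂ))).trace
      = ((Complex.normSq (U 0 1) : ℝ) : ℂ) := by
    rw [hmeasU, trace_mul_diag, hTe 0, hTe 1, ← Complex.normSq_eq_conj_mul_self,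
      ← Complex.normSq_eq_conj_mul_self]
    simp [Matrix.single, Matrix.of_apply]
  have e4 : ((Matrix.single (0 : Fin 2) (0 : Fin 2) (1 : ℂ)) *
      measChannel (1 : Matrix (Fin 2) (Fin 2) ℂ)
        (Matrix.single (0 : Fin 2) (0 : Fin 2) (1 : ℂ))).trace = 1 := by
    rw [hmeas1, trace_mul_diag]
    simp [Matrix.single, Matrix.of_apply]
  have e5 : ((Matrix.single (0 : Fin 2) (0 : Fin 2) (1 : ℂ)) *
      measChannel U (Matrix.single (0 : Fin 2) (0 : Fin 2) (1 : ℂ))).trace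
      = ((Complex.normSq (U 0 0) : ℝ) : ℂ) := by
    rw [hmeasU, trace_mul_diag, hTe 0, hTe 1, ← Complex.normSq_eq_conj_mul_self,
      ← Complex.normSq_eq_conj_mul_self]
    simp [Matrix.single, Matrix.of_apply]
  have esum1 : (0 : Matrix (Fin 2) (Fin 2) ℂ) + Matrix.single 1 1 1 +
      Matrix.single 0 0 1 = 1 := by
    ext i j
    fin_cases i <;> fin_cases j <;>
      simp [Matrix.one_apply, Matrix.single, Matrix.of_apply]
  have esum2 : Matrix.single (0 : Fin 2) (0 : Fin 2) (1 : ℂ) +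
      Matrix.single 1 1 1 + 0 = 1 := by
    ext i j
    fin_cases i <;> fin_cases j <;>
      simp [Matrix.one_apply, Matrix.single, Matrix.of_apply]
  -- the two main equalities
  have hcase2 : Complex.normSq (U 0 1) < 1 → puNoEnt U = Complex.normSq (U 0 1) / 2 := by
    intro hlt
    unfold puNoEnt
    apply IsGreatest.csSup_eq
    constructor
    · refine ⟨Matrix.single 0 0 1, 0, Matrix.single 1 1 1,
        Matrix.single 0 0 1, hσ0D, Matrix.PosSemidef.zero, psdE 1, psdE 0,
        esum1, e1, by simp, ?_⟩
      rw [e3]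
      simp
      ring
    · rintro t ht
      exact (upper t ht).2 hlt
  have hcase1 : Complex.normSq (U 0 1) = 1 → puNoEnt U = 1 := by
    intro heq
    have hU00 : Complex.normSq (U 0 0) = 0 := by linarith
    unfold puNoEnt
    apply IsGreatest.csSup_eq
    constructor
    · refine ⟨Matrix.single 0 0 1, Matrix.single 0 0 1,
        Matrix.single 1 1 1, 0, hσ0D, psdE 0, psdE 1, Matrix.PosSemidef.zero,
        esum2, e1, ?_, ?_⟩
      · rw [e5, hU00]; simp
      · rw [e3, e4, heq]; norm_num
    · rintro t ht
      exact (upper t ht).1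
  refine ⟨fun h => hcase1 (by rw [← habs]; exact h),
    fun h => by rw [habs] at h ⊢; exact hcase2 h, ?_⟩
  rcases lt_or_eq_of_le hale with hlt | heq
  · refine ⟨0, Matrix.single 1 1 1, Matrix.single 0 0 1,
      Matrix.PosSemidef.zero, psdE 1, psdE 0, esum1, e1, by simp, ?_⟩
    rw [e3, hcase2 hlt]
    simp
    ring
  · refine ⟨Matrix.single 0 0 1, Matrix.single 1 1 1, 0,
      psdE 0, psdE 1, Matrix.PosSemidef.zero, esum2, e1, ?_, ?_⟩
    · rw [e5]
      have hU00 : Complex.normSq (U 0 0) = 0 := by linarith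
      rw [hU00]; simp
    · rw [e3, e4, hcase1 heq, heq]
      norm_num

end Paper
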